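/- The specific oriented graph on vertices {A,B,C,D,E,F,G} with edges {AC, AD, AE, AF, AG, BD, BE, CE, CF, CG, DE, DG, EG} admits no orientation in which every vertex is a transmitter, a receiver, or a transitive vertex. -/

import Mathlib

/-- An orientation of a simple graph: each edge gets exactly one direction. -/
structure GraphOrientation {V : Type*} (G : SimpleGraph V) where
  arc : V → V → Prop
  consistent : ∀ u v, G.Adj u v ↔ (arc u v ∨ arc v u)
  asymm : ∀ u v, arc u v → ¬ arc v u

namespace GraphOrientation
variable {V : Type*} {G : SimpleGraph V} (D : GraphOrientation G)

/-- A transmitter has positive out-degree and zero in-degree. -/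
def IsTransmitter (t : V) : Prop := (∃ v, D.arc t v) ∧ ∀ u, ¬ D.arc u t

/-- A receiver has positive in-degree and zero out-degree. -/
def IsReceiver (t : V) : Prop := (∃ u, D.arc u t) ∧ ∀ v, ¬ D.arc t v

/-- A transitive vertex has positive in- and out-degree, and `u → t`, `t → v`
imply `u → v`. -/
def IsTransitiveVertex (t : V) : Prop :=
  (∃ u, D.arc u t) ∧ (∃ v, D.arc t v) ∧ ∀ u v, D.arc u t → D.arc t v → D.arc u v

end GraphOrientation

/-- The 7-vertex graph of Figure 1, with `0,…,6` standing for `A,…,G` and edge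
set `{AC, AD, AE, AF, AG, BD, BE, CE, CF, CG, DE, DG, EG}`. -/
def figGraph : SimpleGraph (Fin 7) :=
  SimpleGraph.fromRel (fun u v => (u, v) ∈
    ([(0,2),(0,3),(0,4),(0,5),(0,6),(1,3),(1,4),(2,4),(2,5),(2,6),(3,4),(3,6),(4,6)] :
      List (Fin 7 × Fin 7)))


private def tb (n p : ℕ) : Bool := n / p % 2 == 1

set_option maxHeartbeats 1000000 in
private def okB (n : ℕ) : Bool :=
  (((((((!(((((tb n 1 || tb n 2) || tb n 4) || tb n 8) || tb n 16) && (((((!tb n 1) || (!tb n 2)) || (!tb n 4)) || (!tb n 8)) || (!tb n 16))) || ((((((((((((((((((((tb n 1 || (!tb n 2)) && ((tb n 1 || (!tb n 4)) || tb n 128)) && ((tb n 1 || (!tb n 8)) || tb n 256)) && ((tb n 1 || (!tb n 16)) || tb n 512)) && (tb n 2 || (!tb n 1))) && ((tb n 2 || (!tb n 4)) || tb n 1024)) && (tb n 2 || (!tb n 8))) && ((tb n 2 || (!tb n 16)) || tb n 2048)) && ((tb n 4 || (!tb n 1)) || (!tb n 128))) && ((tb n 4 || (!tb n 2)) || (!tb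 n 1024))) && (tb n 4 || (!tb n 8))) && ((tb n 4 || (!tb n 16)) || tb n 4096)) && ((tb n 8 || (!tb n 1)) || (!tb n 256))) && (tb n 8 || (!tb n 2))) && (tb n 8 || (!tb n 4))) && (tb n 8 || (!tb n 16))) && ((tb n 16 || (!tb n 1)) || (!tb n 512))) && ((tb n 16 || (!tb n 2)) || (!tb n 2048))) && ((tb n 16 || (!tb n 4)) || (!tb n 4096))) && (tb n 16 || (!tb n 8)))) && (!((tb n 32 || tb n 64) && ((!tb n 32) || (!tb n 64))) || (((tb n 32 || (!tb n 64)) || tb n 1024) && ((tb n 64 || (!tb n 32)) || (!tb n 1024))))) && (!(((((!tb n 1) || tb n 128) || tb n 256) || tb n 512) && (((tb n 1 || (!tb n 128)) || (!tb n 256)) || (!tb n 512))) || ((((((((((((((!tb n 1) || (!tb n 128)) || tb n 4) && (((!tb n 1) || (!tb n 256)) || tb n 8)) && (((!tb n 1) || (!tb n 512)) || tb n 16)) && ((tb n 128 || tb n 1) || (!tb n 4))) && (tb n 128 || (!tb n 256))) && ((tb n 128 || (!tb n 512)) || tb n 4096)) && ((tb n 256 || tb n 1) || (!tb n 8))) &&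 (tb n 256 || (!tb n 128))) && (tb n 256 || (!tb n 512))) && ((tb n 512 || tb n 1) || (!tb n 16))) && ((tb n 512 || (!tb n 128)) || (!tb n 4096))) && (tb n 512 || (!tb n 256))))) && (!(((((!tb n 2) || (!tb n 32)) || tb n 1024) || tb n 2048) && (((tb n 2 || tb n 32) || (!tb n 1024)) || (!tb n 2048))) || (((((((((((((!tb n 2) || tb n 32) && (((!tb n 2) || (!tb n 1024)) || tb n 4)) && (((!tb n 2) || (!tb n 2048)) || tb n 16)) && ((!tb n 32) || tb n 2)) && (((!tb n 32) || (!tb n 1024)) || tb n 64)) && ((!tb n 32) || (!tb n 2048))) && ((tb n 1024 || tb n 2) || (!tb n 4))) && ((tb n 1024 || tb n 32) || (!tb n 64))) && ((tb n 1024 || (!tb n 2048)) || tb n 4096)) && ((tb n 2048 || tb n 2) || (!tb n 16))) && (tb n 2048 || tb n 32)) && ((tb n 2048 || (!tb n 1024)) || (!tb n 4096))))) && (!((((((!tb n 4) || (!tb n 64)) || (!tb n 128)) || (!tb n 1024)) || tb n 4096) && ((((tb n 4 || tb n 64) || tb n 128) || tb n 1024) || (!tb n 4096))) || (((((((((((((((((((((!tb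 n 4) || tb n 64) && (((!tb n 4) || tb n 128) || tb n 1)) && (((!tb n 4) || tb n 1024) || tb n 2)) && (((!tb n 4) || (!tb n 4096)) || tb n 16)) && ((!tb n 64) || tb n 4)) && ((!tb n 64) || tb n 128)) && (((!tb n 64) || tb n 1024) || tb n 32)) && ((!tb n 64) || (!tb n 4096))) && (((!tb n 128) || tb n 4) || (!tb n 1))) && ((!tb n 128) || tb n 64)) && ((!tb n 128) || tb n 1024)) && (((!tb n 128) || (!tb n 4096)) || tb n 512)) && (((!tb n 1024) || tb n 4) || (!tb n 2))) && (((!tb n 1024) || tb n 64) || (!tb n 32))) && ((!tb n 1024) || tb n 128)) && (((!tb n 1024) || (!tb n 4096)) || tb n 2048)) && ((tb n 4096 || tb n 4) || (!tb n 16))) && (tb n 4096 || tb n 64)) && ((tb n 4096 || tb n 128) || (!tb n 512))) && ((tb n 4096 || tb n 1024) || (!tb n 2048))))) && (!(((!tb n 8) || (!tb n 256)) && (tb n 8 || tb n 256)) || ((((!tb n 8) || tb n 256) || tb n 1) && (((!tb n 256) || tb n 8) || (!tb n 1))))) && (!(((((!tb n 16) || (!tb n 512)) || (!tb n 2048)) ||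 (!tb n 4096)) && (((tb n 16 || tb n 512) || tb n 2048) || tb n 4096)) || ((((((((((((((!tb n 16) || tb n 512) || tb n 1) && (((!tb n 16) || tb n 2048) || tb n 2)) && (((!tb n 16) || tb n 4096) || tb n 4)) && (((!tb n 512) || tb n 16) || (!tb n 1))) && ((!tb n 512) || tb n 2048)) && (((!tb n 512) || tb n 4096) || tb n 128)) && (((!tb n 2048) || tb n 16) || (!tb n 2))) && ((!tb n 2048) || tb n 512)) && (((!tb n 2048) || tb n 4096) || tb n 1024)) && (((!tb n 4096) || tb n 16) || (!tb n 4))) && (((!tb n 4096) || tb n 512) || (!tb n 128))) && (((!tb n 4096) || tb n 2048) || (!tb n 1024)))))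

private def chk2 : ℕ → ℕ → Bool
  | a, 0 => !okB a
  | a, k+1 => chk2 a k && chk2 (a + 2^k) k

set_option maxRecDepth 100000 in
set_option maxHeartbeats 8000000 in
private theorem chk_true : chk2 0 13 = true := by decide

private theorem chk2_spec : ∀ k a, chk2 a k = true → ∀ i, i < 2^k → okB (a + i) = false := by
  intro k
  induction k with
  | zero =>
    intro a h i hi
    interval_cases i
    simpa [chk2, Bool.not_eq_true'] using h
  | succ k ih =>
    intro a h i hi
    rw [chk2, Bool.and_eq_true] at h
    by_cases hc : i < 2^k
    · exact ih a h.1 i hc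
    · have h2 : a + i = (a + 2^k) + (i - 2^k) := by omega
      rw [h2]
      exact ih _ h.2 _ (by have := Nat.pow_succ 2 k; omega)

private def bitsToNat : List Bool → ℕ
  | [] => 0
  | b :: l => (cond b 1 0) + 2 * bitsToNat l

private lemma bitsToNat_lt : ∀ l : List Bool, bitsToNat l < 2 ^ l.length := by
  intro l
  induction l with
  | nil => simp [bitsToNat]
  | cons b l ih =>
    simp only [bitsToNat, List.length_cons, pow_succ]
    cases b <;> simp <;> omega

private lemma tb_pow : ∀ (l : List Bool) (i : ℕ) (h : i < l.length),
    tb (bitsToNat l) (2 ^ i) = l[i] := by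
  intro l
  induction l with
  | nil => intro i h; simp at h
  | cons b l ih =>
    intro i h
    cases i with
    | zero =>
      simp only [pow_zero, tb, bitsToNat, Nat.div_one]
      cases b <;> simp [Nat.add_mul_mod_self_left]
    | succ i =>
      have hl : i < l.length := by simpa using h
      have key : tb (bitsToNat (b :: l)) (2 ^ (i+1)) = tb (bitsToNat l) (2 ^ i) := by
        have h2 : (cond b 1 0 + 2 * bitsToNat l) / 2 ^ (i+1) = bitsToNat l / 2 ^ i := by
          rw [pow_succ, Nat.mul_comm (2^i) 2, ← Nat.div_div_eq_div_mul]
          congr 1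
          cases b <;> simp +arith +decide [Nat.add_mul_div_left] <;> omega
        simp only [tb, bitsToNat, h2]
      rw [key, ih i hl]
      simp

private lemma orRes3 {a b c : Prop} (h : ¬a → ¬b → c) : (a ∨ b) ∨ c := by
  by_cases ha : a
  · exact Or.inl (Or.inl ha)
  by_cases hb : b
  · exact Or.inl (Or.inr hb)
  exact Or.inr (h ha hb)

private lemma orRes2 {a b : Prop} (h : ¬a → b) : a ∨ b := by
  by_cases ha : a
  · exact Or.inl ha
  · exact Or.inr (h ha)

private lemma figAdj_iff (u v : Fin 7) : figGraph.Adj u v ↔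
    (u ≠ v ∧ ((u,v) ∈
      ([(0,2),(0,3),(0,4),(0,5),(0,6),(1,3),(1,4),(2,4),(2,5),(2,6),(3,4),(3,6),(4,6)] :
        List (Fin 7 × Fin 7)) ∨ (v,u) ∈
      ([(0,2),(0,3),(0,4),(0,5),(0,6),(1,3),(1,4),(2,4),(2,5),(2,6),(3,4),(3,6),(4,6)] :
        List (Fin 7 × Fin 7)))) := by
  simp only [figGraph, SimpleGraph.fromRel_adj]

instance figGraph.adjDecidable : DecidableRel figGraph.Adj := fun u v =>
  decidable_of_iff _ (figAdj_iff u v).symm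

private lemma dirOf (D : GraphOrientation figGraph) (u v : Fin 7)
    (hadj : figGraph.Adj u v) (h : ¬ D.arc v u) : D.arc u v :=
  ((D.consistent u v).mp hadj).resolve_right h

private lemma noArc (D : GraphOrientation figGraph) (u v : Fin 7)
    (h : ¬ figGraph.Adj u v) : ¬ D.arc u v :=
  fun ha => h ((D.consistent u v).mpr (Or.inl ha))

private lemma bigProp (D : GraphOrientation figGraph)
    (hD : ∀ v : Fin 7, D.IsTransmitter v ∨ D.IsReceiver v ∨ D.IsTransitiveVertex v) :
    (((((((¬(((((D.arc 0 2 ∨ D.arc 0 3) ∨ D.arc 0 4) ∨ D.arc 0 5) ∨ D.arc 0 6) ∧ ((((¬ D.arc 0 2 ∨ ¬ D.arc 0 3) ∨ ¬ D.arc 0 4) ∨ ¬ D.arc 0 5) ∨ ¬ D.arc 0 6)) ∨ ((((((((((((((((((((D.arc 0 2 ∨ ¬ D.arc 0 3) ∧ ((D.arc 0 2 ∨ ¬ D.arc 0 4) ∨ D.arc 2 4)) ∧ ((D.arc 0 2 ∨ ¬ D.arc 0 5) ∨ D.arc 2 5)) ∧ ((D.arc 0 2 ∨ ¬ D.arc 0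 6) ∨ D.arc 2 6)) ∧ (D.arc 0 3 ∨ ¬ D.arc 0 2)) ∧ ((D.arc 0 3 ∨ ¬ D.arc 0 4) ∨ D.arc 3 4)) ∧ (D.arc 0 3 ∨ ¬ D.arc 0 5)) ∧ ((D.arc 0 3 ∨ ¬ D.arc 0 6) ∨ D.arc 3 6)) ∧ ((D.arc 0 4 ∨ ¬ D.arc 0 2) ∨ ¬ D.arc 2 4)) ∧ ((D.arc 0 4 ∨ ¬ D.arc 0 3) ∨ ¬ D.arc 3 4)) ∧ (D.arc 0 4 ∨ ¬ D.arc 0 5)) ∧ ((D.arc 0 4 ∨ ¬ D.arc 0 6) ∨ D.arc 4 6)) ∧ ((D.arc 0 5 ∨ ¬ D.arc 0 2) ∨ ¬ D.arc 2 5)) ∧ (D.arc 0 5 ∨ ¬ D.arc 0 3)) ∧ (D.arc 0 5 ∨ ¬ D.arc 0 4)) ∧ (D.arc 0 5 ∨ ¬ D.arc 0 6)) ∧ ((D.arc 0 6 ∨ ¬ D.arc 0 2) ∨ ¬ D.arc 2 6)) ∧ ((D.arc 0 6 ∨ ¬ D.arc 0 3) ∨ ¬ D.arc 3 6)) ∧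 ((D.arc 0 6 ∨ ¬ D.arc 0 4) ∨ ¬ D.arc 4 6)) ∧ (D.arc 0 6 ∨ ¬ D.arc 0 5))) ∧ (¬((D.arc 1 3 ∨ D.arc 1 4) ∧ (¬ D.arc 1 3 ∨ ¬ D.arc 1 4)) ∨ (((D.arc 1 3 ∨ ¬ D.arc 1 4) ∨ D.arc 3 4) ∧ ((D.arc 1 4 ∨ ¬ D.arc 1 3) ∨ ¬ D.arc 3 4)))) ∧ (¬((((¬ D.arc 0 2 ∨ D.arc 2 4) ∨ D.arc 2 5) ∨ D.arc 2 6) ∧ (((D.arc 0 2 ∨ ¬ D.arc 2 4) ∨ ¬ D.arc 2 5) ∨ ¬ D.arc 2 6)) ∨ (((((((((((((¬ D.arc 0 2 ∨ ¬ D.arc 2 4) ∨ D.arc 0 4) ∧ ((¬ D.arc 0 2 ∨ ¬ D.arc 2 5) ∨ D.arc 0 5)) ∧ ((¬ D.arc 0 2 ∨ ¬ D.arc 2 6) ∨ D.arc 0 6)) ∧ ((D.arc 2 4 ∨ D.arc 0 2) ∨ ¬ D.arc 0 4)) ∧ (D.arc 2 4 ∨ ¬ D.arc 2 5)) ∧ ((D.arc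 2 4 ∨ ¬ D.arc 2 6) ∨ D.arc 4 6)) ∧ ((D.arc 2 5 ∨ D.arc 0 2) ∨ ¬ D.arc 0 5)) ∧ (D.arc 2 5 ∨ ¬ D.arc 2 4)) ∧ (D.arc 2 5 ∨ ¬ D.arc 2 6)) ∧ ((D.arc 2 6 ∨ D.arc 0 2) ∨ ¬ D.arc 0 6)) ∧ ((D.arc 2 6 ∨ ¬ D.arc 2 4) ∨ ¬ D.arc 4 6)) ∧ (D.arc 2 6 ∨ ¬ D.arc 2 5)))) ∧ (¬((((¬ D.arc 0 3 ∨ ¬ D.arc 1 3) ∨ D.arc 3 4) ∨ D.arc 3 6) ∧ (((D.arc 0 3 ∨ D.arc 1 3) ∨ ¬ D.arc 3 4) ∨ ¬ D.arc 3 6)) ∨ ((((((((((((¬ D.arc 0 3 ∨ D.arc 1 3) ∧ ((¬ D.arc 0 3 ∨ ¬ D.arc 3 4) ∨ D.arc 0 4)) ∧ ((¬ D.arc 0 3 ∨ ¬ D.arc 3 6) ∨ D.arc 0 6)) ∧ (¬ D.arc 1 3 ∨ D.arc 0 3)) ∧ ((¬ D.arc 1 3 ∨ ¬ D.arc 3 4)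 ∨ D.arc 1 4)) ∧ (¬ D.arc 1 3 ∨ ¬ D.arc 3 6)) ∧ ((D.arc 3 4 ∨ D.arc 0 3) ∨ ¬ D.arc 0 4)) ∧ ((D.arc 3 4 ∨ D.arc 1 3) ∨ ¬ D.arc 1 4)) ∧ ((D.arc 3 4 ∨ ¬ D.arc 3 6) ∨ D.arc 4 6)) ∧ ((D.arc 3 6 ∨ D.arc 0 3) ∨ ¬ D.arc 0 6)) ∧ (D.arc 3 6 ∨ D.arc 1 3)) ∧ ((D.arc 3 6 ∨ ¬ D.arc 3 4) ∨ ¬ D.arc 4 6)))) ∧ (¬(((((¬ D.arc 0 4 ∨ ¬ D.arc 1 4) ∨ ¬ D.arc 2 4) ∨ ¬ D.arc 3 4) ∨ D.arc 4 6) ∧ ((((D.arc 0 4 ∨ D.arc 1 4) ∨ D.arc 2 4) ∨ D.arc 3 4) ∨ ¬ D.arc 4 6)) ∨ ((((((((((((((((((((¬ D.arc 0 4 ∨ D.arc 1 4) ∧ ((¬ D.arc 0 4 ∨ D.arc 2 4) ∨ D.arc 0 2)) ∧ ((¬ D.arc 0 4 ∨ D.arc 3 4) ∨ D.arc 0 3))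 ∧ ((¬ D.arc 0 4 ∨ ¬ D.arc 4 6) ∨ D.arc 0 6)) ∧ (¬ D.arc 1 4 ∨ D.arc 0 4)) ∧ (¬ D.arc 1 4 ∨ D.arc 2 4)) ∧ ((¬ D.arc 1 4 ∨ D.arc 3 4) ∨ D.arc 1 3)) ∧ (¬ D.arc 1 4 ∨ ¬ D.arc 4 6)) ∧ ((¬ D.arc 2 4 ∨ D.arc 0 4) ∨ ¬ D.arc 0 2)) ∧ (¬ D.arc 2 4 ∨ D.arc 1 4)) ∧ (¬ D.arc 2 4 ∨ D.arc 3 4)) ∧ ((¬ D.arc 2 4 ∨ ¬ D.arc 4 6) ∨ D.arc 2 6)) ∧ ((¬ D.arc 3 4 ∨ D.arc 0 4) ∨ ¬ D.arc 0 3)) ∧ ((¬ D.arc 3 4 ∨ D.arc 1 4) ∨ ¬ D.arc 1 3)) ∧ (¬ D.arc 3 4 ∨ D.arc 2 4)) ∧ ((¬ D.arc 3 4 ∨ ¬ D.arc 4 6) ∨ D.arc 3 6)) ∧ ((D.arc 4 6 ∨ D.arc 0 4) ∨ ¬ D.arc 0 6)) ∧ (D.arc 4 6 ∨ D.arc 1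 4)) ∧ ((D.arc 4 6 ∨ D.arc 2 4) ∨ ¬ D.arc 2 6)) ∧ ((D.arc 4 6 ∨ D.arc 3 4) ∨ ¬ D.arc 3 6)))) ∧ (¬((¬ D.arc 0 5 ∨ ¬ D.arc 2 5) ∧ (D.arc 0 5 ∨ D.arc 2 5)) ∨ (((¬ D.arc 0 5 ∨ D.arc 2 5) ∨ D.arc 0 2) ∧ ((¬ D.arc 2 5 ∨ D.arc 0 5) ∨ ¬ D.arc 0 2)))) ∧ (¬((((¬ D.arc 0 6 ∨ ¬ D.arc 2 6) ∨ ¬ D.arc 3 6) ∨ ¬ D.arc 4 6) ∧ (((D.arc 0 6 ∨ D.arc 2 6) ∨ D.arc 3 6) ∨ D.arc 4 6)) ∨ (((((((((((((¬ D.arc 0 6 ∨ D.arc 2 6) ∨ D.arc 0 2) ∧ ((¬ D.arc 0 6 ∨ D.arc 3 6) ∨ D.arc 0 3)) ∧ ((¬ D.arc 0 6 ∨ D.arc 4 6) ∨ D.arc 0 4)) ∧ ((¬ D.arc 2 6 ∨ D.arc 0 6) ∨ ¬ D.arc 0 2)) ∧ (¬ D.arc 2 6 ∨ D.arc 3 6))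 ∧ ((¬ D.arc 2 6 ∨ D.arc 4 6) ∨ D.arc 2 4)) ∧ ((¬ D.arc 3 6 ∨ D.arc 0 6) ∨ ¬ D.arc 0 3)) ∧ (¬ D.arc 3 6 ∨ D.arc 2 6)) ∧ ((¬ D.arc 3 6 ∨ D.arc 4 6) ∨ D.arc 3 4)) ∧ ((¬ D.arc 4 6 ∨ D.arc 0 6) ∨ ¬ D.arc 0 4)) ∧ ((¬ D.arc 4 6 ∨ D.arc 2 6) ∨ ¬ D.arc 2 4)) ∧ ((¬ D.arc 4 6 ∨ D.arc 3 6) ∨ ¬ D.arc 3 4)))) := by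
  refine ⟨⟨⟨⟨⟨⟨?_, ?_⟩, ?_⟩, ?_⟩, ?_⟩, ?_⟩, ?_⟩
  · -- vertex 0
    rcases hD 0 with ⟨-, h⟩ | ⟨-, h⟩ | ⟨-, -, h3⟩
    · refine Or.inl ?_
      rintro ⟨-, hI⟩
      rcases hI with ((((h') | h') | h') | h') | h'
      · exact h' (dirOf D 0 2 (by decide) (h 2))
      · exact h' (dirOf D 0 3 (by decide) (h 3))
      · exact h' (dirOf D 0 4 (by decide) (h 4))
      · exact h' (dirOf D 0 5 (by decide) (h 5))
      · exact h' (dirOf D 0 6 (by decide) (h 6))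
    · refine Or.inl ?_
      rintro ⟨hO, -⟩
      rcases hO with ((((h') | h') | h') | h') | h'
      · exact h _ h'
      · exact h _ h'
      · exact h _ h'
      · exact h _ h'
      · exact h _ h'
    · exact Or.inr ⟨⟨⟨⟨⟨⟨⟨⟨⟨⟨⟨⟨⟨⟨⟨⟨⟨⟨⟨orRes2 (fun hA => (fun hB => noArc D 2 3 (by decide) (h3 _ _ (dirOf D 2 0 (by decide) hA) hB))), orRes3 (fun hA hB => (h3 _ _ (dirOf D 2 0 (by decide) hA) (not_not.mp hB)))⟩, orRes3 (fun hA hB => (h3 _ _ (dirOf D 2 0 (by decide) hA) (not_not.mp hB)))⟩, orRes3 (fun hA hB => (h3 _ _ (dirOf D 2 0 (by decide) hA) (not_not.mp hB)))⟩, orRes2 (fun hA => (fun hB => noArc D 3 2 (by decide) (h3 _ _ (dirOf D 3 0 (by decide) hA) hB)))⟩, orRes3 (fun hA hB => (h3 _ _ (dirOf D 3 0 (by decide) hA) (not_not.mp hB)))⟩, orRes2 (fun hA => (fun hB => noArc D 3 5 (by decide) (h3 _ _ (dirOf D 3 0 (by decide) hA) hB)))⟩, orRes3 (fun hA hB =>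 (h3 _ _ (dirOf D 3 0 (by decide) hA) (not_not.mp hB)))⟩, orRes3 (fun hA hB => (D.asymm _ _ (h3 _ _ (dirOf D 4 0 (by decide) hA) (not_not.mp hB))))⟩, orRes3 (fun hA hB => (D.asymm _ _ (h3 _ _ (dirOf D 4 0 (by decide) hA) (not_not.mp hB))))⟩, orRes2 (fun hA => (fun hB => noArc D 4 5 (by decide) (h3 _ _ (dirOf D 4 0 (by decide) hA) hB)))⟩, orRes3 (fun hA hB => (h3 _ _ (dirOf D 4 0 (by decide) hA) (not_not.mp hB)))⟩, orRes3 (fun hA hB => (D.asymm _ _ (h3 _ _ (dirOf D 5 0 (by decide) hA) (not_not.mp hB))))⟩, orRes2 (fun hA => (fun hB => noArc D 5 3 (by decide) (h3 _ _ (dirOf D 5 0 (by decide) hA) hB)))⟩, orRes2 (fun hA => (fun hB => noArc D 5 4 (by decide) (h3 _ _ (dirOf D 5 0 (by decide) hA) hB)))⟩, orRes2 (fun hA => (fun hB => noArc D 5 6 (by decide) (h3 _ _ (dirOf D 5 0 (by decide) hA) hB)))⟩, orRes3 (fun hA hB => (D.asymm _ _ (h3 _ _ (dirOf D 6 0 (by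 decide) hA) (not_not.mp hB))))⟩, orRes3 (fun hA hB => (D.asymm _ _ (h3 _ _ (dirOf D 6 0 (by decide) hA) (not_not.mp hB))))⟩, orRes3 (fun hA hB => (D.asymm _ _ (h3 _ _ (dirOf D 6 0 (by decide) hA) (not_not.mp hB))))⟩, orRes2 (fun hA => (fun hB => noArc D 6 5 (by decide) (h3 _ _ (dirOf D 6 0 (by decide) hA) hB)))⟩
  · -- vertex 1
    rcases hD 1 with ⟨-, h⟩ | ⟨-, h⟩ | ⟨-, -, h3⟩
    · refine Or.inl ?_
      rintro ⟨-, hI⟩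
      rcases hI with (h') | h'
      · exact h' (dirOf D 1 3 (by decide) (h 3))
      · exact h' (dirOf D 1 4 (by decide) (h 4))
    · refine Or.inl ?_
      rintro ⟨hO, -⟩
      rcases hO with (h') | h'
      · exact h _ h'
      · exact h _ h'
    · exact Or.inr ⟨orRes3 (fun hA hB => (h3 _ _ (dirOf D 3 1 (by decide) hA) (not_not.mp hB))), orRes3 (fun hA hB => (D.asymm _ _ (h3 _ _ (dirOf D 4 1 (by decide) hA) (not_not.mp hB))))⟩
  · -- vertex 2
    rcases hD 2 with ⟨-, h⟩ | ⟨-, h⟩ | ⟨-, -, h3⟩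
    · refine Or.inl ?_
      rintro ⟨-, hI⟩
      rcases hI with (((h') | h') | h') | h'
      · exact h _ h'
      · exact h' (dirOf D 2 4 (by decide) (h 4))
      · exact h' (dirOf D 2 5 (by decide) (h 5))
      · exact h' (dirOf D 2 6 (by decide) (h 6))
    · refine Or.inl ?_
      rintro ⟨hO, -⟩
      rcases hO with (((h') | h') | h') | h'
      · exact h' (dirOf D 0 2 (by decide) (h 0))
      · exact h _ h'
      · exact h _ h'
      · exact h _ h'
    · exact Or.inr ⟨⟨⟨⟨⟨⟨⟨⟨⟨⟨⟨orRes3 (fun hA hB => (h3 _ _ (not_not.mp hA) (not_not.mp hB))), orRes3 (fun hA hB => (h3 _ _ (not_not.mp hA) (not_not.mp hB)))⟩, orRes3 (fun hA hB => (h3 _ _ (not_not.mp hA) (not_not.mp hB)))⟩, orRes3 (fun hA hB => (D.asymm _ _ (h3 _ _ (dirOf D 4 2 (by decide) hA) (dirOf D 2 0 (by decide) hB))))⟩, orRes2 (fun hA => (fun hB => noArc D 4 5 (by decide) (h3 _ _ (dirOf D 4 2 (by decide) hA) hB)))⟩, orRes3 (fun hA hB => (h3 _ _ (dirOf D 4 2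 (by decide) hA) (not_not.mp hB)))⟩, orRes3 (fun hA hB => (D.asymm _ _ (h3 _ _ (dirOf D 5 2 (by decide) hA) (dirOf D 2 0 (by decide) hB))))⟩, orRes2 (fun hA => (fun hB => noArc D 5 4 (by decide) (h3 _ _ (dirOf D 5 2 (by decide) hA) hB)))⟩, orRes2 (fun hA => (fun hB => noArc D 5 6 (by decide) (h3 _ _ (dirOf D 5 2 (by decide) hA) hB)))⟩, orRes3 (fun hA hB => (D.asymm _ _ (h3 _ _ (dirOf D 6 2 (by decide) hA) (dirOf D 2 0 (by decide) hB))))⟩, orRes3 (fun hA hB => (D.asymm _ _ (h3 _ _ (dirOf D 6 2 (by decide) hA) (not_not.mp hB))))⟩, orRes2 (fun hA => (fun hB => noArc D 6 5 (by decide) (h3 _ _ (dirOf D 6 2 (by decide) hA) hB)))⟩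
  · -- vertex 3
    rcases hD 3 with ⟨-, h⟩ | ⟨-, h⟩ | ⟨-, -, h3⟩
    · refine Or.inl ?_
      rintro ⟨-, hI⟩
      rcases hI with (((h') | h') | h') | h'
      · exact h _ h'
      · exact h _ h'
      · exact h' (dirOf D 3 4 (by decide) (h 4))
      · exact h' (dirOf D 3 6 (by decide) (h 6))
    · refine Or.inl ?_
      rintro ⟨hO, -⟩
      rcases hO with (((h') | h') | h') | h'
      · exact h' (dirOf D 0 3 (by decide) (h 0))
      · exact h' (dirOf D 1 3 (by decide) (h 1))
      · exact h _ h'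
      · exact h _ h'
    · exact Or.inr ⟨⟨⟨⟨⟨⟨⟨⟨⟨⟨⟨orRes2 (fun hA => (dirOf D 1 3 (by decide) (fun hB => noArc D 0 1 (by decide) (h3 _ _ (not_not.mp hA) hB)))), orRes3 (fun hA hB => (h3 _ _ (not_not.mp hA) (not_not.mp hB)))⟩, orRes3 (fun hA hB => (h3 _ _ (not_not.mp hA) (not_not.mp hB)))⟩, orRes2 (fun hA => (dirOf D 0 3 (by decide) (fun hB => noArc D 1 0 (by decide) (h3 _ _ (not_not.mp hA) hB))))⟩, orRes3 (fun hA hB => (h3 _ _ (not_not.mp hA) (not_not.mp hB)))⟩, orRes2 (fun hA => (fun hB => noArc D 1 6 (by decide) (h3 _ _ (not_not.mp hA) hB)))⟩, orRes3 (fun hA hB => (D.asymm _ _ (h3 _ _ (dirOf D 4 3 (by decide) hA) (dirOf D 3 0 (by decide) hB))))⟩, orRes3 (fun hA hB => (D.asymm _ _ (h3 _ _ (dirOf D 4 3 (by decide) hA) (dirOf D 3 1 (by decide) hB))))⟩, orRes3 (fun hA hB => (h3 _ _ (dirOf D 4 3 (by decide) hA) (not_not.mp hB)))⟩, orRes3 (fun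 hA hB => (D.asymm _ _ (h3 _ _ (dirOf D 6 3 (by decide) hA) (dirOf D 3 0 (by decide) hB))))⟩, orRes2 (fun hA => (dirOf D 1 3 (by decide) (fun hB => noArc D 6 1 (by decide) (h3 _ _ (dirOf D 6 3 (by decide) hA) hB))))⟩, orRes3 (fun hA hB => (D.asymm _ _ (h3 _ _ (dirOf D 6 3 (by decide) hA) (not_not.mp hB))))⟩
  · -- vertex 4
    rcases hD 4 with ⟨-, h⟩ | ⟨-, h⟩ | ⟨-, -, h3⟩
    · refine Or.inl ?_
      rintro ⟨-, hI⟩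
      rcases hI with ((((h') | h') | h') | h') | h'
      · exact h _ h'
      · exact h _ h'
      · exact h _ h'
      · exact h _ h'
      · exact h' (dirOf D 4 6 (by decide) (h 6))
    · refine Or.inl ?_
      rintro ⟨hO, -⟩
      rcases hO with ((((h') | h') | h') | h') | h'
      · exact h' (dirOf D 0 4 (by decide) (h 0))
      · exact h' (dirOf D 1 4 (by decide) (h 1))
      · exact h' (dirOf D 2 4 (by decide) (h 2))
      · exact h' (dirOf D 3 4 (by decide) (h 3))
      · exact h _ h'
    · exact Or.inr ⟨⟨⟨⟨⟨⟨⟨⟨⟨⟨⟨⟨⟨⟨⟨⟨⟨⟨⟨orRes2 (fun hA => (dirOf D 1 4 (by decide) (fun hB => noArc D 0 1 (by decide) (h3 _ _ (not_not.mp hA) hB)))), orRes3 (fun hA hB => (h3 _ _ (not_not.mp hA) (dirOf D 4 2 (by decide) hB)))⟩, orRes3 (fun hA hB => (h3 _ _ (not_not.mp hA) (dirOf D 4 3 (by decide) hB)))⟩, orRes3 (fun hA hB => (h3 _ _ (not_not.mp hA) (not_not.mp hB)))⟩, orRes2 (fun hA => (dirOf D 0 4 (by decide) (fun hB => noArc D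 1 0 (by decide) (h3 _ _ (not_not.mp hA) hB))))⟩, orRes2 (fun hA => (dirOf D 2 4 (by decide) (fun hB => noArc D 1 2 (by decide) (h3 _ _ (not_not.mp hA) hB))))⟩, orRes3 (fun hA hB => (h3 _ _ (not_not.mp hA) (dirOf D 4 3 (by decide) hB)))⟩, orRes2 (fun hA => (fun hB => noArc D 1 6 (by decide) (h3 _ _ (not_not.mp hA) hB)))⟩, orRes3 (fun hA hB => (D.asymm _ _ (h3 _ _ (not_not.mp hA) (dirOf D 4 0 (by decide) hB))))⟩, orRes2 (fun hA => (dirOf D 1 4 (by decide) (fun hB => noArc D 2 1 (by decide) (h3 _ _ (not_not.mp hA) hB))))⟩, orRes2 (fun hA => (dirOf D 3 4 (by decide) (fun hB => noArc D 2 3 (by decide) (h3 _ _ (not_not.mp hA) hB))))⟩, orRes3 (fun hA hB => (h3 _ _ (not_not.mp hA) (not_not.mp hB)))⟩, orRes3 (fun hA hB => (D.asymm _ _ (h3 _ _ (not_not.mp hA) (dirOf D 4 0 (by decide) hB))))⟩, orRes3 (fun hA hB => (D.asymm _ _ (h3 _ _ (not_not.mp hA) (dirOf D 4 1 (by decide)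 hB))))⟩, orRes2 (fun hA => (dirOf D 2 4 (by decide) (fun hB => noArc D 3 2 (by decide) (h3 _ _ (not_not.mp hA) hB))))⟩, orRes3 (fun hA hB => (h3 _ _ (not_not.mp hA) (not_not.mp hB)))⟩, orRes3 (fun hA hB => (D.asymm _ _ (h3 _ _ (dirOf D 6 4 (by decide) hA) (dirOf D 4 0 (by decide) hB))))⟩, orRes2 (fun hA => (dirOf D 1 4 (by decide) (fun hB => noArc D 6 1 (by decide) (h3 _ _ (dirOf D 6 4 (by decide) hA) hB))))⟩, orRes3 (fun hA hB => (D.asymm _ _ (h3 _ _ (dirOf D 6 4 (by decide) hA) (dirOf D 4 2 (by decide) hB))))⟩, orRes3 (fun hA hB => (D.asymm _ _ (h3 _ _ (dirOf D 6 4 (by decide) hA) (dirOf D 4 3 (by decide) hB))))⟩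
  · -- vertex 5
    rcases hD 5 with ⟨-, h⟩ | ⟨-, h⟩ | ⟨-, -, h3⟩
    · refine Or.inl ?_
      rintro ⟨-, hI⟩
      rcases hI with (h') | h'
      · exact h _ h'
      · exact h _ h'
    · refine Or.inl ?_
      rintro ⟨hO, -⟩
      rcases hO with (h') | h'
      · exact h' (dirOf D 0 5 (by decide) (h 0))
      · exact h' (dirOf D 2 5 (by decide) (h 2))
    · exact Or.inr ⟨orRes3 (fun hA hB => (h3 _ _ (not_not.mp hA) (dirOf D 5 2 (by decide) hB))), orRes3 (fun hA hB => (D.asymm _ _ (h3 _ _ (not_not.mp hA) (dirOf D 5 0 (by decide) hB))))⟩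
  · -- vertex 6
    rcases hD 6 with ⟨-, h⟩ | ⟨-, h⟩ | ⟨-, -, h3⟩
    · refine Or.inl ?_
      rintro ⟨-, hI⟩
      rcases hI with (((h') | h') | h') | h'
      · exact h _ h'
      · exact h _ h'
      · exact h _ h'
      · exact h _ h'
    · refine Or.inl ?_
      rintro ⟨hO, -⟩
      rcases hO with (((h') | h') | h') | h'
      · exact h' (dirOf D 0 6 (by decide) (h 0))
      · exact h' (dirOf D 2 6 (by decide) (h 2))
      · exact h' (dirOf D 3 6 (by decide) (h 3))
      · exact h' (dirOf D 4 6 (by decide) (h 4))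
    · exact Or.inr ⟨⟨⟨⟨⟨⟨⟨⟨⟨⟨⟨orRes3 (fun hA hB => (h3 _ _ (not_not.mp hA) (dirOf D 6 2 (by decide) hB))), orRes3 (fun hA hB => (h3 _ _ (not_not.mp hA) (dirOf D 6 3 (by decide) hB)))⟩, orRes3 (fun hA hB => (h3 _ _ (not_not.mp hA) (dirOf D 6 4 (by decide) hB)))⟩, orRes3 (fun hA hB => (D.asymm _ _ (h3 _ _ (not_not.mp hA) (dirOf D 6 0 (by decide) hB))))⟩, orRes2 (fun hA => (dirOf D 3 6 (by decide) (fun hB => noArc D 2 3 (by decide) (h3 _ _ (not_not.mp hA) hB))))⟩, orRes3 (fun hA hB => (h3 _ _ (not_not.mp hA) (dirOf D 6 4 (by decide) hB)))⟩, orRes3 (fun hA hB => (D.asymm _ _ (h3 _ _ (not_not.mp hA) (dirOf D 6 0 (by decide) hB))))⟩, orRes2 (fun hA => (dirOf D 2 6 (by decide) (fun hB => noArc D 3 2 (by decide) (h3 _ _ (not_not.mp hA) hB))))⟩, orRes3 (fun hA hB => (h3 _ _ (not_not.mp hA) (dirOf D 6 4 (by decide) hB)))⟩, orRes3 (fun hA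 hB => (D.asymm _ _ (h3 _ _ (not_not.mp hA) (dirOf D 6 0 (by decide) hB))))⟩, orRes3 (fun hA hB => (D.asymm _ _ (h3 _ _ (not_not.mp hA) (dirOf D 6 2 (by decide) hB))))⟩, orRes3 (fun hA hB => (D.asymm _ _ (h3 _ _ (not_not.mp hA) (dirOf D 6 3 (by decide) hB))))⟩

theorem figGraph_no_good_orientation :
    ¬ ∃ D : GraphOrientation figGraph, ∀ v : Fin 7,
      D.IsTransmitter v ∨ D.IsReceiver v ∨ D.IsTransitiveVertex v := by
  rintro ⟨D, hD⟩
  classical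
  set n := bitsToNat
    [decide (D.arc 0 2), decide (D.arc 0 3), decide (D.arc 0 4), decide (D.arc 0 5),
     decide (D.arc 0 6), decide (D.arc 1 3), decide (D.arc 1 4), decide (D.arc 2 4),
     decide (D.arc 2 5), decide (D.arc 2 6), decide (D.arc 3 4), decide (D.arc 3 6),
     decide (D.arc 4 6)] with hn
  have e0 : tb n 1 = decide (D.arc 0 2) := by
    rw [hn, show (1:ℕ) = 2^0 by norm_num, tb_pow _ 0 (by simp)]; rfl
  have e1 : tb n 2 = decide (D.arc 0 3) := by
    rw [hn, show (2:ℕ) = 2^1 by norm_num, tb_pow _ 1 (by simp)]; rfl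
  have e2 : tb n 4 = decide (D.arc 0 4) := by
    rw [hn, show (4:ℕ) = 2^2 by norm_num, tb_pow _ 2 (by simp)]; rfl
  have e3 : tb n 8 = decide (D.arc 0 5) := by
    rw [hn, show (8:ℕ) = 2^3 by norm_num, tb_pow _ 3 (by simp)]; rfl
  have e4 : tb n 16 = decide (D.arc 0 6) := by
    rw [hn, show (16:ℕ) = 2^4 by norm_num, tb_pow _ 4 (by simp)]; rfl
  have e5 : tb n 32 = decide (D.arc 1 3) := by
    rw [hn, show (32:ℕ) = 2^5 by norm_num, tb_pow _ 5 (by simp)]; rfl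
  have e6 : tb n 64 = decide (D.arc 1 4) := by
    rw [hn, show (64:ℕ) = 2^6 by norm_num, tb_pow _ 6 (by simp)]; rfl
  have e7 : tb n 128 = decide (D.arc 2 4) := by
    rw [hn, show (128:ℕ) = 2^7 by norm_num, tb_pow _ 7 (by simp)]; rfl
  have e8 : tb n 256 = decide (D.arc 2 5) := by
    rw [hn, show (256:ℕ) = 2^8 by norm_num, tb_pow _ 8 (by simp)]; rfl
  have e9 : tb n 512 = decide (D.arc 2 6) := by
    rw [hn, show (512:ℕ) = 2^9 by norm_num, tb_pow _ 9 (by simp)]; rfl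
  have e10 : tb n 1024 = decide (D.arc 3 4) := by
    rw [hn, show (1024:ℕ) = 2^10 by norm_num, tb_pow _ 10 (by simp)]; rfl
  have e11 : tb n 2048 = decide (D.arc 3 6) := by
    rw [hn, show (2048:ℕ) = 2^11 by norm_num, tb_pow _ 11 (by simp)]; rfl
  have e12 : tb n 4096 = decide (D.arc 4 6) := by
    rw [hn, show (4096:ℕ) = 2^12 by norm_num, tb_pow _ 12 (by simp)]; rfl
  have hfalse : okB n = false := by
    have hlt : n < 2 ^ 13 := by
      rw [hn]
      exact bitsToNat_lt _
    simpa using chk2_spec 13 0 chk_true n hlt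
  have htrue : okB n = true := by
    have hP := bigProp D hD
    simp only [okB, e0, e1, e2, e3, e4, e5, e6, e7, e8, e9, e10, e11, e12,
      ← decide_not, ← Bool.decide_or, ← Bool.decide_and, decide_eq_true_eq]
    exact hP
  rw [htrue] at hfalse
  exact absurd hfalse (by simp)
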